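/- Let theta be a parameter for the architecture A = (n_0, ..., n_{L+1}). Fix a hidden neuron (l, i) with l in {1, ..., L} and i in {1, ..., n_l}, and let x_0 in R^{n_0} satisfy z^(l)_i(x_0) = 0 and z^(k)_j(x_0) ≠ 0 for every hidden pair (k, j) ≠ (l, i) with k in {1, ..., L}. For each k in {1, ..., L} let S_k = {j : z^(k)_j(x_0) > 0}. Let g^T be the i-th row of W^(l) D_{S_{l-1}} W^(l-1) ... D_{S_1} W^(1) and assume g ≠ 0; let v = W^(L+1) D_{S_L} W^(L) ... D_{S_{l+1}} W^(l+1) e_i in R^{n_{L+1}}, where e_i is the i-th standard basis vector of R^{n_l}. Then there exist delta > 0, matrices A_+, A_- in R^{n_{L+1} x n_0}, and vectors c_+, c_- such that f_theta(x) = A_+ x + c_+ for all x in the open ball B(x_0, delta) with <g, x - x_0> >= 0, f_theta(x) = A_- x + c_- for all x in B(x_0, delta) with <g, x - x_0> <= 0, and A_+ - A_- = v g^T; in particular (A_+ - A_-)(g / ||g||_2) = ||g||_2 * v. -/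

import Mathlib

namespace ReLUNet

open scoped BigOperators

/-- The parameter space of a fully connected ReLU network with architecture
`(n 0, n 1, ..., n (L+1))`.  The index `l : Fin (L+1)` stands for the layer
`l+1` of the paper, carrying a weight matrix `W^(l+1) ∈ ℝ^{n (l+1) × n l}`
and a bias vector `b^(l+1) ∈ ℝ^{n (l+1)}`. -/
abbrev ParamSpace (L : ℕ) (n : ℕ → ℕ) : Type :=
  (l : Fin (L + 1)) → ((Fin (n (l.1 + 1)) → Fin (n l.1) → ℝ) × (Fin (n (l.1 + 1)) → ℝ))

/-- The hidden activations: `hidden θ l x` is `h_l(x)`, with `h_0(x) = x` and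
`h_{l+1}(x) = ReLU (W^(l+1) h_l(x) + b^(l+1))`. -/
noncomputable def hidden {L : ℕ} {n : ℕ → ℕ} (θ : ParamSpace L n) :
    (l : ℕ) → (Fin (n 0) → ℝ) → Fin (n l) → ℝ
  | 0, x => x
  | l + 1, x =>
    if h : l < L + 1 then
      fun i => max ((∑ j, (θ ⟨l, h⟩).1 i j * hidden θ l x j) + (θ ⟨l, h⟩).2 i) 0
    else
      fun _ => 0

/-- The function realized by the parameter `θ`:
`f_θ(x) = W^(L+1) h_L(x) + b^(L+1)`. -/
noncomputable def realize {L : ℕ} {n : ℕ → ℕ} (θ : ParamSpace L n)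
    (x : Fin (n 0) → ℝ) : Fin (n (L + 1)) → ℝ :=
  fun p =>
    (∑ j, (θ ⟨L, Nat.lt_succ_self L⟩).1 p j * hidden θ L x j) +
      (θ ⟨L, Nat.lt_succ_self L⟩).2 p


/-- The preactivation of layer `k+1` (layers are indexed so that `preact θ k`
is `z^{(k+1)} = W^{(k+1)} h_k + b^{(k+1)}` of the paper). -/
noncomputable def preact {L : ℕ} {n : ℕ → ℕ} (θ : ParamSpace L n) (k : ℕ)
    (x : Fin (n 0) → ℝ) : Fin (n (k + 1)) → ℝ :=
  if h : k < L + 1 then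
    fun i => (∑ j, (θ ⟨k, h⟩).1 i j * hidden θ k x j) + (θ ⟨k, h⟩).2 i
  else fun _ => 0

/-- The set of strictly active neurons in layer `k` at the input `x0`. -/
def activePattern {L : ℕ} {n : ℕ → ℕ} (θ : ParamSpace L n) (x0 : Fin (n 0) → ℝ) :
    (k : ℕ) → Set (Fin (n k))
  | 0 => ∅
  | k + 1 => {j | 0 < preact θ k x0 j}

/-- The weight matrices of `θ`, extended by zero above the top layer. -/
noncomputable def weightMatrix {L : ℕ} {n : ℕ → ℕ} (θ : ParamSpace L n) (l : ℕ) :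
    Matrix (Fin (n (l + 1))) (Fin (n l)) ℝ :=
  if h : l < L + 1 then Matrix.of (θ ⟨l, h⟩).1 else 0

/-- The masked matrix product `W^(b) D_{S (b-1)} ⋯ D_{S (c+1)} W^(c+1)`,
mapping layer-`c` vectors to layer-`b` vectors; for `b = c + 1` it is `W^(c+1)`. -/
noncomputable def chainP (n : ℕ → ℕ)
    (W : ∀ l : ℕ, Matrix (Fin (n (l + 1))) (Fin (n l)) ℝ)
    (S : ∀ l : ℕ, Set (Fin (n l))) (c : ℕ) :
    (b : ℕ) → Matrix (Fin (n b)) (Fin (n c)) ℝ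
  | 0 => 0
  | b + 1 =>
    if h : b = c then
      Matrix.of fun i j => W b i (finCongr (congrArg n h.symm) j)
    else
      W b * Matrix.diagonal (fun i => Set.indicator (S b) (fun _ => (1 : ℝ)) i) *
        chainP n W S c b

/-- The Euclidean norm on `ℝ^d`. -/
noncomputable def euclNorm {d : ℕ} (w : Fin d → ℝ) : ℝ := Real.sqrt (∑ j, (w j) ^ 2)


section Aux

variable {L : ℕ} {n : ℕ → ℕ}

lemma hidden_succ (θ : ParamSpace L n) (b : ℕ) (hb : b < L + 1) (x : Fin (n 0) → ℝ)
    (j : Fin (n (b + 1))) : hidden θ (b + 1) x j = max (preact θ b x j) 0 := by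
  simp only [hidden, preact, dif_pos hb]

lemma preact_apply (θ : ParamSpace L n) (b : ℕ) (hb : b < L + 1) (x : Fin (n 0) → ℝ)
    (j : Fin (n (b + 1))) :
    preact θ b x j = (∑ q, weightMatrix θ b j q * hidden θ b x q) + (θ ⟨b, hb⟩).2 j := by
  simp only [preact, weightMatrix, dif_pos hb, Matrix.of_apply]

lemma realize_eq_preact (θ : ParamSpace L n) (x : Fin (n 0) → ℝ) (p : Fin (n (L + 1))) :
    realize θ x p = preact θ L x p := by
  simp only [realize, preact, dif_pos (Nat.lt_succ_self L)]

lemma continuous_hidden (θ : ParamSpace L n) (k : ℕ) :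
    Continuous fun x : Fin (n 0) → ℝ => hidden θ k x := by
  induction k with
  | zero => exact continuous_id
  | succ l ih =>
    by_cases h : l < L + 1
    · simp only [hidden, dif_pos h]
      refine continuous_pi fun i => ?_
      exact ((continuous_finset_sum _ fun j _ =>
        (continuous_const.mul ((continuous_apply j).comp ih))).add continuous_const).max
        continuous_const
    · simp only [hidden, dif_neg h]
      exact continuous_const

lemma continuous_preact (θ : ParamSpace L n) (k : ℕ) (j : Fin (n (k + 1))) :
    Continuous fun x : Fin (n 0) → ℝ => preact θ k x j := by
  by_cases h : k < L + 1
  · simp only [preact, dif_pos h]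
    exact (continuous_finset_sum _ fun q _ =>
      (continuous_const.mul ((continuous_apply q).comp (continuous_hidden θ k)))).add
      continuous_const
  · simp only [preact, dif_neg h]
    exact continuous_const

/-- Masked affine linear part of layer `b`. -/
noncomputable def Mmat (θ : ParamSpace L n) (x0 : Fin (n 0) → ℝ) :
    (b : ℕ) → Fin (n b) → Fin (n 0) → ℝ
  | 0 => fun j m => if j = m then 1 else 0
  | b + 1 => fun j m =>
      Set.indicator (activePattern θ x0 (b + 1)) (fun _ => (1 : ℝ)) j *
        ∑ q, weightMatrix θ b j q * Mmat θ x0 b q m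

/-- Propagated jump direction. -/
noncomputable def uvec (θ : ParamSpace L n) (x0 : Fin (n 0) → ℝ) (a : ℕ) (i : Fin (n (a + 1))) :
    (b : ℕ) → Fin (n b) → ℝ
  | 0 => 0
  | b + 1 =>
    if h : b = a then
      fun j => if j = finCongr (congrArg n (congrArg Nat.succ h)).symm i then 1 else 0
    else
      fun j => Set.indicator (activePattern θ x0 (b + 1)) (fun _ => (1 : ℝ)) j *
        ∑ q, weightMatrix θ b j q * uvec θ x0 a i b q

lemma uvec_eq_zero (θ : ParamSpace L n) (x0 : Fin (n 0) → ℝ) (a : ℕ) (i : Fin (n (a + 1))) :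
    ∀ b, b ≤ a → uvec θ x0 a i b = 0 := by
  intro b
  induction b with
  | zero => intro _; rfl
  | succ b ih =>
    intro hb
    have hba : b ≠ a := by omega
    funext j
    simp only [uvec, dif_neg hba, ih (by omega), Pi.zero_apply, mul_zero,
      Finset.sum_const_zero]

lemma finCongr_self {m : ℕ} (h : m = m) (j : Fin m) : finCongr h j = j := rfl

lemma chainP_base (W : ∀ l : ℕ, Matrix (Fin (n (l + 1))) (Fin (n l)) ℝ)
    (S : ∀ l : ℕ, Set (Fin (n l))) (c : ℕ) (p : Fin (n (c + 1))) (q : Fin (n c)) :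
    chainP n W S c (c + 1) p q = W c p q := by
  rw [chainP, dif_pos rfl]
  rfl

lemma chainP_step (W : ∀ l : ℕ, Matrix (Fin (n (l + 1))) (Fin (n l)) ℝ)
    (S : ∀ l : ℕ, Set (Fin (n l))) (c b : ℕ) (h : b ≠ c) :
    chainP n W S c (b + 1) =
      W b * Matrix.diagonal (fun i => Set.indicator (S b) (fun _ => (1 : ℝ)) i) *
        chainP n W S c b := by
  rw [chainP, dif_neg h]

lemma chain_row (θ : ParamSpace L n) (x0 : Fin (n 0) → ℝ) :
    ∀ b (j : Fin (n (b + 1))) (m : Fin (n 0)),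
      chainP n (weightMatrix θ) (activePattern θ x0) 0 (b + 1) j m
        = ∑ q, weightMatrix θ b j q * Mmat θ x0 b q m := by
  intro b
  induction b with
  | zero =>
    intro j m
    rw [chainP_base]
    simp only [Mmat, mul_ite, mul_one, mul_zero, Finset.sum_ite_eq', Finset.mem_univ, if_true]
  | succ b ih =>
    intro j m
    have hb0 : b + 1 ≠ 0 := Nat.succ_ne_zero b
    rw [chainP_step _ _ _ _ hb0, Matrix.mul_assoc, Matrix.mul_apply]
    rw [Finset.sum_congr rfl fun q _ => by
      rw [Matrix.diagonal_mul, ih q m]]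
    simp only [Mmat]
    try exact Finset.sum_congr rfl fun q _ => by ring

lemma uchain (θ : ParamSpace L n) (x0 : Fin (n 0) → ℝ) (a : ℕ) (i : Fin (n (a + 1))) :
    ∀ b, a < b → ∀ p : Fin (n (b + 1)),
      chainP n (weightMatrix θ) (activePattern θ x0) (a + 1) (b + 1) p i
        = ∑ q, weightMatrix θ b p q * uvec θ x0 a i b q := by
  intro b
  induction b with
  | zero => intro h; omega
  | succ b ih =>
    intro hab p
    rcases eq_or_lt_of_le (Nat.lt_succ_iff.mp hab) with h | h
    · -- a = b
      subst h
      rw [chainP_base]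
      simp only [uvec, eq_self_iff_true, dite_true, finCongr_self, mul_ite, mul_one, mul_zero,
        Finset.sum_ite_eq', Finset.mem_univ, if_true]
      exact ((Finset.sum_eq_single i (fun q _ hq =>
          (congrArg (fun t : ℝ => weightMatrix θ (a + 1) p q * t) (if_neg hq)).trans (mul_zero _))
        (fun h => absurd (Finset.mem_univ i) h)).trans
          ((congrArg (fun t : ℝ => weightMatrix θ (a + 1) p i * t) (if_pos rfl)).trans
            (mul_one _))).symm
    · have hba : b ≠ a := by omega
      have hb1 : b + 1 ≠ a + 1 := by omega
      rw [chainP_step _ _ _ _ hb1, Matrix.mul_assoc, Matrix.mul_apply]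
      rw [Finset.sum_congr rfl fun q _ => by
        rw [Matrix.diagonal_mul, ih h q]]
      simp only [uvec, dif_neg hba]
      try exact Finset.sum_congr rfl fun q _ => by ring

lemma sum_lin {N M : ℕ} (W : Fin M → ℝ) (A : Fin M → Fin N → ℝ) (c u : Fin M → ℝ)
    (t : ℝ) (d : Fin N → ℝ) :
    ∑ q, W q * ((∑ m, A q m * d m) + c q + u q * t)
      = (∑ m, (∑ q, W q * A q m) * d m) + (∑ q, W q * c q) + (∑ q, W q * u q) * t := by
  simp only [mul_add, Finset.sum_add_distrib, Finset.mul_sum, Finset.sum_mul, mul_assoc]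
  rw [Finset.sum_comm]

lemma dist_lt_of_euclNorm_lt {d : ℕ} {x y : Fin d → ℝ} {ε : ℝ} (hε : 0 < ε)
    (h : euclNorm (fun j => x j - y j) < ε) : dist x y < ε := by
  rw [dist_pi_lt_iff hε]
  intro j
  rw [Real.dist_eq]
  have h1 : |x j - y j| ≤ euclNorm fun j => x j - y j := by
    rw [euclNorm, ← Real.sqrt_sq_eq_abs]
    exact Real.sqrt_le_sqrt (Finset.single_le_sum (f := fun m => (x m - y m) ^ 2)
      (fun m _ => sq_nonneg _) (Finset.mem_univ j))
  linarith


lemma uvec_succ_self (θ : ParamSpace L n) (x0 : Fin (n 0) → ℝ) (a : ℕ) (i : Fin (n (a + 1))) :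
    uvec θ x0 a i (a + 1) = fun j => if j = i then 1 else 0 := by
  rw [uvec, dif_pos rfl]
  exact rfl

lemma uvec_succ_ne (θ : ParamSpace L n) (x0 : Fin (n 0) → ℝ) (a : ℕ) (i : Fin (n (a + 1)))
    (b : ℕ) (h : b ≠ a) :
    uvec θ x0 a i (b + 1) = fun j =>
      Set.indicator (activePattern θ x0 (b + 1)) (fun _ => (1 : ℝ)) j *
        ∑ q, weightMatrix θ b j q * uvec θ x0 a i b q := by
  rw [uvec, dif_neg h]

lemma Mmat_succ (θ : ParamSpace L n) (x0 : Fin (n 0) → ℝ) (b : ℕ) (j : Fin (n (b + 1)))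
    (m : Fin (n 0)) :
    Mmat θ x0 (b + 1) j m =
      Set.indicator (activePattern θ x0 (b + 1)) (fun _ => (1 : ℝ)) j *
        ∑ q, weightMatrix θ b j q * Mmat θ x0 b q m := rfl

end Aux

/-- **Local affine decomposition of a deep network at a single breakpoint.**
Let `θ` be a parameter, `(a+1, i)` a hidden neuron (so `1 ≤ a+1 ≤ L`), and `x₀`
a point where the preactivation of `(a+1, i)` vanishes and the preactivations of
all other hidden neurons are nonzero.  With `S_k` the strictly active sets at
`x₀`, let `gᵀ = eᵢᵀ W^{(a+1)} D_{S_a} ⋯ D_{S_1} W^{(1)}` (assumed nonzero) and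
`v = W^{(L+1)} D_{S_L} ⋯ D_{S_{a+2}} W^{(a+2)} eᵢ`.  Then near `x₀` the realized
function is affine on each side of the hyperplane `⟨g, x - x₀⟩ = 0`, with jump
of linear part `v gᵀ`; in particular `(A₊ - A₋)(g / ‖g‖₂) = ‖g‖₂ v`. -/
theorem deep_local_tropical_weight (L : ℕ) (n : ℕ → ℕ) (θ : ParamSpace L n)
    (a : ℕ) (ha : a < L) (i : Fin (n (a + 1)))
    (x0 : Fin (n 0) → ℝ)
    (hz : preact θ a x0 i = 0)
    (hsame : ∀ j : Fin (n (a + 1)), j ≠ i → preact θ a x0 j ≠ 0)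
    (hother : ∀ b, b < L → b ≠ a → ∀ j : Fin (n (b + 1)), preact θ b x0 j ≠ 0)
    (g : Fin (n 0) → ℝ)
    (hgdef : g = fun j => chainP n (weightMatrix θ) (activePattern θ x0) 0 (a + 1) i j)
    (hg : g ≠ 0)
    (v : Fin (n (L + 1)) → ℝ)
    (hvdef : v = fun p => chainP n (weightMatrix θ) (activePattern θ x0) (a + 1) (L + 1) p i) :
    ∃ δ > (0 : ℝ), ∃ (Ap Am : Fin (n (L + 1)) → Fin (n 0) → ℝ)
      (cp cm : Fin (n (L + 1)) → ℝ),
      (∀ x, euclNorm (fun j => x j - x0 j) < δ → 0 ≤ (∑ j, g j * (x j - x0 j)) →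
        ∀ p, realize θ x p = (∑ j, Ap p j * x j) + cp p) ∧
      (∀ x, euclNorm (fun j => x j - x0 j) < δ → (∑ j, g j * (x j - x0 j)) ≤ 0 →
        ∀ p, realize θ x p = (∑ j, Am p j * x j) + cm p) ∧
      (∀ p j, Ap p j - Am p j = v p * g j) ∧
      (∀ p, (∑ j, (Ap p j - Am p j) * (g j / euclNorm g)) = euclNorm g * v p) := by
  classical
  have hUopen : IsOpen (⋂ b : Fin L, ⋂ j : Fin (n (b.1 + 1)),
      ({x : Fin (n 0) → ℝ | 0 < preact θ b.1 x0 j → 0 < preact θ b.1 x j} ∩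
       {x : Fin (n 0) → ℝ | preact θ b.1 x0 j < 0 → preact θ b.1 x j < 0})) := by
    refine isOpen_iInter_of_finite fun b => isOpen_iInter_of_finite fun j =>
      IsOpen.inter ?_ ?_
    · by_cases h : 0 < preact θ b.1 x0 j
      · have he : {x : Fin (n 0) → ℝ | 0 < preact θ b.1 x0 j → 0 < preact θ b.1 x j}
            = (fun x => preact θ b.1 x j) ⁻¹' Set.Ioi 0 := by
          ext x; simp [h]
        rw [he]; exact isOpen_Ioi.preimage (continuous_preact θ b.1 j)
      · have he : {x : Fin (n 0) → ℝ | 0 < preact θ b.1 x0 j → 0 < preact θ b.1 x j}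
            = Set.univ := Set.eq_univ_of_forall fun x hx => absurd hx h
        rw [he]; exact isOpen_univ
    · by_cases h : preact θ b.1 x0 j < 0
      · have he : {x : Fin (n 0) → ℝ | preact θ b.1 x0 j < 0 → preact θ b.1 x j < 0}
            = (fun x => preact θ b.1 x j) ⁻¹' Set.Iio 0 := by
          ext x; simp [h]
        rw [he]; exact isOpen_Iio.preimage (continuous_preact θ b.1 j)
      · have he : {x : Fin (n 0) → ℝ | preact θ b.1 x0 j < 0 → preact θ b.1 x j < 0}
            = Set.univ := Set.eq_univ_of_forall fun x hx => absurd hx h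
        rw [he]; exact isOpen_univ
  have hx0U : x0 ∈ ⋂ b : Fin L, ⋂ j : Fin (n (b.1 + 1)),
      ({x : Fin (n 0) → ℝ | 0 < preact θ b.1 x0 j → 0 < preact θ b.1 x j} ∩
       {x : Fin (n 0) → ℝ | preact θ b.1 x0 j < 0 → preact θ b.1 x j < 0}) := by
    simp only [Set.mem_iInter, Set.mem_inter_iff, Set.mem_setOf_eq]
    exact fun b j => ⟨id, id⟩
  obtain ⟨ε, hε, hball⟩ := Metric.isOpen_iff.mp hUopen x0 hx0U
  have hsign : ∀ x, dist x x0 < ε → ∀ b, b < L → ∀ j : Fin (n (b + 1)),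
      (0 < preact θ b x0 j → 0 < preact θ b x j) ∧
      (preact θ b x0 j < 0 → preact θ b x j < 0) := by
    intro x hx b hb j
    have hm := hball (Metric.mem_ball.mpr hx)
    simp only [Set.mem_iInter, Set.mem_inter_iff, Set.mem_setOf_eq] at hm
    exact hm ⟨b, hb⟩ j
  have main : ∀ b, b ≤ L → ∀ x, dist x x0 < ε → ∀ j : Fin (n b),
      hidden θ b x j =
        (∑ m, Mmat θ x0 b j m * (x m - x0 m)) + hidden θ b x0 j
          + uvec θ x0 a i b j * max (∑ m, g m * (x m - x0 m)) 0 := by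
    intro b
    induction b with
    | zero =>
      intro _ x _ j
      simp only [hidden, Mmat, uvec, Pi.zero_apply, zero_mul, add_zero, ite_mul, one_mul,
        Finset.sum_ite_eq, Finset.sum_ite_eq', Finset.mem_univ, if_true]
      ring
    | succ b ih =>
      intro hbL x hx j
      have hb' : b < L := by omega
      have hb1 : b < L + 1 := by omega
      have hpre : ∀ j' : Fin (n (b + 1)), preact θ b x j' =
          (∑ m, (∑ q, weightMatrix θ b j' q * Mmat θ x0 b q m) * (x m - x0 m))
            + preact θ b x0 j'
            + (∑ q, weightMatrix θ b j' q * uvec θ x0 a i b q)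
              * max (∑ m, g m * (x m - x0 m)) 0 := by
        intro j'
        rw [preact_apply θ b hb1 x j',
          Finset.sum_congr rfl fun q _ => by rw [ih (by omega) x hx q],
          sum_lin, preact_apply θ b hb1 x0 j']
        ring
      rw [hidden_succ θ b hb1 x j, hidden_succ θ b hb1 x0 j]
      by_cases hba : b = a
      · subst hba
        have hu0 : uvec θ x0 b i b = 0 := uvec_eq_zero θ x0 b i b le_rfl
        by_cases hji : j = i
        · subst hji
          have hrow : ∀ m, (∑ q, weightMatrix θ b j q * Mmat θ x0 b q m) = g m := by
            intro m; rw [← chain_row θ x0 b j m, hgdef]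
          have hpx : preact θ b x j = ∑ m, g m * (x m - x0 m) := by
            rw [hpre j, hz]
            simp only [hu0, Pi.zero_apply, mul_zero, Finset.sum_const_zero, zero_mul,
              add_zero, hrow]
          have hnotmem : j ∉ activePattern θ x0 (b + 1) := by
            simp only [activePattern, Set.mem_setOf_eq, hz]
            exact lt_irrefl 0
          rw [hpx, hz]
          simp only [Mmat_succ, Set.indicator_of_notMem hnotmem, zero_mul,
            Finset.sum_const_zero, uvec_succ_self, eq_self_iff_true, if_true, max_self,
            one_mul, zero_add]
        · rcases (hsame j hji).lt_or_gt with hneg | hpos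
          · have hxneg : preact θ b x j < 0 := (hsign x hx b hb' j).2 hneg
            have hnotmem : j ∉ activePattern θ x0 (b + 1) := by
              simp only [activePattern, Set.mem_setOf_eq]
              exact not_lt.mpr hneg.le
            rw [max_eq_right hxneg.le, max_eq_right hneg.le]
            simp only [Mmat_succ, Set.indicator_of_notMem hnotmem, zero_mul,
              Finset.sum_const_zero, uvec_succ_self, if_neg hji, add_zero, zero_add]
          · have hxpos : 0 < preact θ b x j := (hsign x hx b hb' j).1 hpos
            have hmem : j ∈ activePattern θ x0 (b + 1) := by
              simp only [activePattern, Set.mem_setOf_eq]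
              exact hpos
            rw [max_eq_left hxpos.le, max_eq_left hpos.le, hpre j]
            simp only [Mmat_succ, Set.indicator_of_mem hmem, one_mul, uvec_succ_self,
              if_neg hji, hu0, Pi.zero_apply, mul_zero, Finset.sum_const_zero, zero_mul,
              add_zero]
      · have hne : ∀ j' : Fin (n (b + 1)), preact θ b x0 j' ≠ 0 := hother b hb' hba
        rcases (hne j).lt_or_gt with hneg | hpos
        · have hxneg : preact θ b x j < 0 := (hsign x hx b hb' j).2 hneg
          have hnotmem : j ∉ activePattern θ x0 (b + 1) := by
            simp only [activePattern, Set.mem_setOf_eq]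
            exact not_lt.mpr hneg.le
          rw [max_eq_right hxneg.le, max_eq_right hneg.le]
          simp only [Mmat_succ, uvec_succ_ne θ x0 a i b hba,
            Set.indicator_of_notMem hnotmem, zero_mul, Finset.sum_const_zero, add_zero,
            zero_add]
        · have hxpos : 0 < preact θ b x j := (hsign x hx b hb' j).1 hpos
          have hmem : j ∈ activePattern θ x0 (b + 1) := by
            simp only [activePattern, Set.mem_setOf_eq]
            exact hpos
          rw [max_eq_left hxpos.le, max_eq_left hpos.le, hpre j]
          simp only [Mmat_succ, uvec_succ_ne θ x0 a i b hba, Set.indicator_of_mem hmem,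
            one_mul]
  have hvrow : ∀ p, v p = ∑ q, weightMatrix θ L p q * uvec θ x0 a i L q := by
    intro p; rw [hvdef]; exact uchain θ x0 a i L ha p
  have hrel : ∀ x, dist x x0 < ε → ∀ p, realize θ x p =
      (∑ m, (∑ q, weightMatrix θ L p q * Mmat θ x0 L q m) * (x m - x0 m))
        + realize θ x0 p + v p * max (∑ m, g m * (x m - x0 m)) 0 := by
    intro x hx p
    rw [realize_eq_preact, preact_apply θ L (Nat.lt_succ_self L) x p,
      Finset.sum_congr rfl fun q _ => by rw [main L le_rfl x hx q],
      sum_lin, ← hvrow p, realize_eq_preact θ x0 p,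
      preact_apply θ L (Nat.lt_succ_self L) x0 p]
    ring
  refine ⟨ε, hε,
    fun p m => (∑ q, weightMatrix θ L p q * Mmat θ x0 L q m) + v p * g m,
    fun p m => ∑ q, weightMatrix θ L p q * Mmat θ x0 L q m,
    fun p => realize θ x0 p
      - (∑ m, (∑ q, weightMatrix θ L p q * Mmat θ x0 L q m) * x0 m)
      - v p * ∑ m, g m * x0 m,
    fun p => realize θ x0 p
      - (∑ m, (∑ q, weightMatrix θ L p q * Mmat θ x0 L q m) * x0 m),
    ?_, ?_, ?_, ?_⟩
  · intro x hx h0 p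
    have hd := dist_lt_of_euclNorm_lt hε hx
    rw [hrel x hd p, max_eq_left h0]
    simp only [mul_sub, add_mul, Finset.sum_add_distrib, Finset.sum_sub_distrib,
      mul_assoc, ← Finset.mul_sum]
    ring
  · intro x hx h0 p
    have hd := dist_lt_of_euclNorm_lt hε hx
    rw [hrel x hd p, max_eq_right h0]
    simp only [mul_sub, Finset.sum_sub_distrib, mul_zero, add_zero]
    ring
  · intro p m; ring
  · intro p
    obtain ⟨j0, hj0⟩ := Function.ne_iff.mp hg
    have hsum : (0 : ℝ) < ∑ m, g m ^ 2 := by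
      refine Finset.sum_pos' (fun m _ => sq_nonneg _) ⟨j0, Finset.mem_univ j0, ?_⟩
      exact lt_of_le_of_ne (sq_nonneg _) (Ne.symm (pow_ne_zero 2 hj0))
    have hE : 0 < euclNorm g := Real.sqrt_pos.mpr hsum
    have hE2 : euclNorm g ^ 2 = ∑ m, g m ^ 2 := Real.sq_sqrt hsum.le
    rw [Finset.sum_congr rfl fun m _ => show
        ((∑ q, weightMatrix θ L p q * Mmat θ x0 L q m) + v p * g m
          - ∑ q, weightMatrix θ L p q * Mmat θ x0 L q m) * (g m / euclNorm g)
          = v p / euclNorm g * g m ^ 2 from by ring]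
    rw [← Finset.mul_sum, ← hE2]
    field_simp


end ReLUNet
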